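/- Let P₀ and P₁ be laws of a Poisson point process on [0,1] × ℝ where under P_g, points lie below the graph of g with intensity n·f_D(x)·1_{\{y ≤ g(x)\}} (restricted to a bounded band containing both graphs), with g = 0 under P₀ and g = f_n(x) = C(π(n-1))^{-1}sin(π(n-1)x) under P₁. Then the test T = 1{X([0,1] × (0,∞)) > 0} satisfies P₀(T = 1) = 0 and P₁(T = 1) ≥ 1 - exp(-n∫₀¹ (f_n)_+(x) dx) = 1 - exp(-Cπ^{-2} n/(n-1)), which is bounded away from 0 uniformly in n. -/

import Mathlib

open Set MeasureTheory Real

/-- The law of a Poisson point process with finite intensity measure `ν`, represented on the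
space of finite ordered point configurations `(n : ℕ) × (Fin n → E)`. -/
noncomputable def pppLaw {E : Type*} [MeasurableSpace E] (ν : Measure E) [SigmaFinite ν] :
    Measure ((n : ℕ) × (Fin n → E)) :=
  Measure.sum (fun n => (ENNReal.ofReal (Real.exp (-(ν Set.univ).toReal)) / n.factorial) •
    Measure.map (Sigma.mk n) (Measure.pi (fun _ : Fin n => ν)))

/-- Intensity measure of the PPP with boundary function `g` and uniform design on `[0,1]`,
restricted to the bounded band `[0,1] × [-(C+1), C+1]`:
`λ_g(x,y) = n · 1_{x ∈ [0,1], -(C+1) ≤ y ≤ g(x)}`. -/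
noncomputable def bandIntensity (C : ℝ) (n : ℕ) (g : ℝ → ℝ) : Measure (ℝ × ℝ) :=
  (volume : Measure (ℝ × ℝ)).withDensity fun z =>
    Set.indicator {z : ℝ × ℝ | z.1 ∈ Icc (0:ℝ) 1 ∧ z.2 ∈ Icc (-(C + 1)) (g z.1)}
      (fun _ => (n : ENNReal)) z

lemma measurable_sigma_mk' {α} {β : α → Type*} [∀ a, MeasurableSpace (β a)] (a : α) :
    Measurable (Sigma.mk a : β a → Sigma β) := fun _ hs =>
  MeasurableSpace.measurableSet_iInf.1 hs a

lemma measurableSet_sigma_iff' {α} {β : α → Type*} [∀ a, MeasurableSpace (β a)]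
    {s : Set (Sigma β)} : MeasurableSet s ↔ ∀ a, MeasurableSet (Sigma.mk a ⁻¹' s) :=
  MeasurableSpace.measurableSet_iInf

lemma pppLaw_apply_pi {E : Type*} [MeasurableSpace E] (ν : Measure E) [SigmaFinite ν]
    (hfin : ν Set.univ ≠ ⊤)
    (s : Set ((k : ℕ) × (Fin k → E))) (t : Set E) (ht : MeasurableSet t)
    (h : ∀ k, Sigma.mk k ⁻¹' s = Set.pi Set.univ (fun _ : Fin k => t)) :
    pppLaw ν s = ENNReal.ofReal (Real.exp ((ν t).toReal - (ν Set.univ).toReal)) := by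
  have hs : MeasurableSet s := measurableSet_sigma_iff'.2 fun k => by
    rw [h k]; exact MeasurableSet.univ_pi fun _ => ht
  have htfin : ν t ≠ ⊤ := (lt_of_le_of_lt (measure_mono (subset_univ t)) hfin.lt_top).ne
  set a : ℝ := (ν t).toReal with ha
  set m : ℝ := (ν Set.univ).toReal with hm
  have ha0 : 0 ≤ a := ENNReal.toReal_nonneg
  rw [pppLaw, Measure.sum_apply _ hs]
  have hterm : ∀ k : ℕ,
      ((ENNReal.ofReal (Real.exp (-m)) / k.factorial) •
        Measure.map (Sigma.mk k) (Measure.pi (fun _ : Fin k => ν))) s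
      = ENNReal.ofReal (Real.exp (-m) * a ^ k / k.factorial) := by
    intro k
    rw [Measure.smul_apply, Measure.map_apply (measurable_sigma_mk' k) hs, h k,
      Measure.pi_pi]
    have : ∀ _i : Fin k, ν t = ENNReal.ofReal a := fun _ => (ENNReal.ofReal_toReal htfin).symm
    rw [Finset.prod_congr rfl (fun i _ => this i), Finset.prod_const, Finset.card_univ,
      Fintype.card_fin, smul_eq_mul, ← ENNReal.ofReal_pow ha0,
      ENNReal.ofReal_div_of_pos (by exact_mod_cast k.factorial_pos : (0:ℝ) < k.factorial),
      ENNReal.ofReal_natCast, div_eq_mul_inv, div_eq_mul_inv, mul_right_comm,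
      ← ENNReal.ofReal_mul (Real.exp_nonneg _)]
  refine (tsum_congr hterm).trans ?_
  have hnn : ∀ k : ℕ, 0 ≤ Real.exp (-m) * a ^ k / k.factorial := fun k => by positivity
  have hsum : Summable (fun k : ℕ => Real.exp (-m) * a ^ k / k.factorial) := by
    simpa [mul_div_assoc] using (Real.summable_pow_div_factorial a).mul_left (Real.exp (-m))
  rw [← ENNReal.ofReal_tsum_of_nonneg hnn hsum]
  congr 1
  have hexp : ∑' k : ℕ, a ^ k / (k.factorial : ℝ) = Real.exp a := by
    rw [Real.exp_eq_exp_ℝ, NormedSpace.exp_eq_tsum_div]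
  calc ∑' k : ℕ, Real.exp (-m) * a ^ k / k.factorial
      = Real.exp (-m) * ∑' k : ℕ, a ^ k / (k.factorial : ℝ) := by
        rw [← tsum_mul_left]; simp [mul_div_assoc]
    _ = Real.exp (a - m) := by rw [hexp, ← Real.exp_add]; ring_nf

lemma sinpos_intble (a b : ℝ) :
    IntervalIntegrable (fun u => max (Real.sin u) 0) volume a b :=
  (Real.continuous_sin.max continuous_const).intervalIntegrable a b

lemma sinpos_arch : ∫ u in (0:ℝ)..π, max (Real.sin u) 0 = 2 := by
  have h : Set.EqOn (fun u => max (Real.sin u) 0) Real.sin (Set.uIcc 0 π) := by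
    intro u hu
    rw [Set.uIcc_of_le Real.pi_pos.le] at hu
    exact max_eq_left (Real.sin_nonneg_of_nonneg_of_le_pi hu.1 hu.2)
  rw [intervalIntegral.integral_congr h, integral_sin]
  norm_num

lemma sinpos_zero : ∫ u in π..(2*π), max (Real.sin u) 0 = 0 := by
  have h : Set.EqOn (fun u => max (Real.sin u) 0) (fun _ => (0:ℝ)) (Set.uIcc π (2*π)) := by
    intro u hu
    rw [Set.uIcc_of_le (by linarith [Real.pi_pos])] at hu
    have : Real.sin u ≤ 0 := by
      have h1 : 0 ≤ Real.sin (u - π) := Real.sin_nonneg_of_nonneg_of_le_pi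
        (by linarith [hu.1]) (by linarith [hu.2])
      rw [Real.sin_sub_pi] at h1; linarith
    exact max_eq_right this
  rw [intervalIntegral.integral_congr h]
  simp

lemma sinpos_per : Function.Periodic (fun u => max (Real.sin u) 0) (2*π) := fun x => by
  simp [Real.sin_add_two_pi]

lemma sinpos_ge (m : ℕ) : (m:ℝ) ≤ ∫ u in (0:ℝ)..(π*m), max (Real.sin u) 0 := by
  induction m using Nat.strong_induction_on with
  | _ m ih =>
    match m with
    | 0 => simp
    | 1 => rw [show ((1:ℕ):ℝ) = 1 by norm_num]; rw [mul_one, sinpos_arch]; norm_num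
    | (k+2) =>
      have hsplit : ∫ u in (0:ℝ)..(π*(k+2:ℕ)), max (Real.sin u) 0
          = (∫ u in (0:ℝ)..(π*k), max (Real.sin u) 0)
            + ∫ u in (π*k)..(π*(k+2:ℕ)), max (Real.sin u) 0 :=
        (intervalIntegral.integral_add_adjacent_intervals (sinpos_intble _ _)
          (sinpos_intble _ _)).symm
      have h2 : ∫ u in (π*k)..(π*(k+2:ℕ)), max (Real.sin u) 0 = 2 := by
        have he : π*((k:ℝ)+2) = π*k + 2*π := by ring
        rw [show ((k+2:ℕ):ℝ) = (k:ℝ)+2 by push_cast; ring, he,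
          sinpos_per.intervalIntegral_add_eq (π*k) 0, zero_add]
        rw [← intervalIntegral.integral_add_adjacent_intervals (a := (0:ℝ)) (b := π)
          (c := 2*π) (sinpos_intble _ _) (sinpos_intble _ _), sinpos_arch, sinpos_zero]
        norm_num
      rw [hsplit, h2]
      have := ih k (by omega)
      push_cast
      push_cast at this
      linarith

theorem stmt18 (C : ℝ) (hC : 0 < C) (n : ℕ) (hn : 2 ≤ n)
    (fn : ℝ → ℝ)
    (hfn : ∀ x : ℝ, fn x = C / (π * ((n : ℝ) - 1)) * Real.sin (π * ((n : ℝ) - 1) * x))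
    (hband : ∀ x ∈ Icc (0:ℝ) 1, |fn x| ≤ C + 1)
    [SigmaFinite (bandIntensity C n (fun _ => (0:ℝ)))] [SigmaFinite (bandIntensity C n fn)] :
    pppLaw (bandIntensity C n (fun _ => (0:ℝ)))
        {ω : (k : ℕ) × (Fin k → ℝ × ℝ) | ∃ i : Fin ω.1, 0 < (ω.2 i).2} = 0 ∧
    ENNReal.ofReal (1 - Real.exp (-(C / π ^ 2) * ((n : ℝ) / ((n : ℝ) - 1)))) ≤
      pppLaw (bandIntensity C n fn)
        {ω : (k : ℕ) × (Fin k → ℝ × ℝ) | ∃ i : Fin ω.1, 0 < (ω.2 i).2} ∧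
    ENNReal.ofReal (1 - Real.exp (-(C / π ^ 2))) ≤
      pppLaw (bandIntensity C n fn)
        {ω : (k : ℕ) × (Fin k → ℝ × ℝ) | ∃ i : Fin ω.1, 0 < (ω.2 i).2} := by
  have hπ := Real.pi_pos
  set A : Set ((k : ℕ) × (Fin k → ℝ × ℝ)) :=
    {ω : (k : ℕ) × (Fin k → ℝ × ℝ) | ∃ i : Fin ω.1, 0 < (ω.2 i).2} with hAdef
  set S : Set (ℝ × ℝ) := {z : ℝ × ℝ | 0 < z.2} with hSdef
  have hSmeas : MeasurableSet S := measurableSet_lt measurable_const measurable_snd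
  have hpre : ∀ k : ℕ, Sigma.mk k ⁻¹' A = ⋃ i : Fin k, Function.eval i ⁻¹' S := by
    intro k; ext f; simp [hAdef, hSdef, Function.eval]
  have hA : MeasurableSet A := measurableSet_sigma_iff'.2 fun k => by
    rw [hpre k]; exact MeasurableSet.iUnion fun i => (measurable_pi_apply i) hSmeas
  -- continuity of fn
  have hfc : Continuous fn := by
    rw [funext hfn]
    exact continuous_const.mul (Real.continuous_sin.comp ((continuous_const.mul continuous_id)))
  have hb0 : (0:ℝ) < (n:ℝ) - 1 := by
    have : (2:ℝ) ≤ n := by exact_mod_cast hn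
    linarith
  constructor
  · -- Part 1 : under P₀ no points above 0
    have hν0 : bandIntensity C n (fun _ => (0:ℝ)) S = 0 := by
      rw [bandIntensity, withDensity_apply _ hSmeas]
      have h0 : ∀ᵐ z ∂(volume : Measure (ℝ × ℝ)), z ∈ S →
          Set.indicator {z : ℝ × ℝ | z.1 ∈ Icc (0:ℝ) 1 ∧
            z.2 ∈ Icc (-(C + 1)) ((fun _ => (0:ℝ)) z.1)} (fun _ => (n : ENNReal)) z = 0 := by
        refine ae_of_all _ fun z hz => ?_
        refine Set.indicator_of_notMem ?_ _
        intro hmem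
        exact absurd hmem.2.2 (not_le.2 hz)
      rw [setLIntegral_congr_fun hSmeas (fun z hz => Set.indicator_of_notMem (fun hmem => absurd hmem.2.2 (not_le.2 hz)) _)]
      simp
    rw [pppLaw, Measure.sum_apply _ hA, ENNReal.tsum_eq_zero]
    intro k
    have hnull : ∀ i : Fin k,
        Measure.pi (fun _ : Fin k => bandIntensity C n fun _ => (0:ℝ))
          (Function.eval i ⁻¹' S) = 0 := fun i =>
      Measure.pi_eval_preimage_null (fun _ : Fin k => bandIntensity C n fun _ => (0:ℝ)) hν0
    rw [Measure.smul_apply, Measure.map_apply (measurable_sigma_mk' k) hA, hpre k,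
      measure_iUnion_null hnull]
    simp
  -- Part 2
  set ν : Measure (ℝ × ℝ) := bandIntensity C n fn with hνdef
  set B : Set (ℝ × ℝ) :=
    {z : ℝ × ℝ | z.1 ∈ Icc (0:ℝ) 1 ∧ z.2 ∈ Icc (-(C + 1)) (fn z.1)} with hBdef
  have hB : MeasurableSet B := by
    have h1 : MeasurableSet {z : ℝ × ℝ | z.1 ∈ Icc (0:ℝ) 1} :=
      measurable_fst measurableSet_Icc
    have h2 : MeasurableSet {z : ℝ × ℝ | -(C+1) ≤ z.2} :=
      measurableSet_le measurable_const measurable_snd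
    have h3 : MeasurableSet {z : ℝ × ℝ | z.2 ≤ fn z.1} :=
      measurableSet_le measurable_snd (hfc.measurable.comp measurable_fst)
    have : B = {z : ℝ × ℝ | z.1 ∈ Icc (0:ℝ) 1} ∩
        ({z : ℝ × ℝ | -(C+1) ≤ z.2} ∩ {z : ℝ × ℝ | z.2 ≤ fn z.1}) := by
      ext z; simp [hBdef, Set.mem_Icc, and_assoc]
    rw [this]; exact h1.inter (h2.inter h3)
  have hνapply : ∀ s : Set (ℝ × ℝ), MeasurableSet s →
      ν s = ∫⁻ z in s, Set.indicator B (fun _ => (n : ENNReal)) z := by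
    intro s hs
    rw [hνdef, bandIntensity, withDensity_apply _ hs]
  -- finiteness
  have hrect : (volume (Icc (0:ℝ) 1 ×ˢ Icc (-(C+1)) (C+1))) ≠ ⊤ := by
    rw [Measure.volume_eq_prod, Measure.prod_prod, Real.volume_Icc, Real.volume_Icc]
    exact ENNReal.mul_ne_top ENNReal.ofReal_ne_top ENNReal.ofReal_ne_top
  have hfin : ν Set.univ ≠ ⊤ := by
    have hb : ∀ z : ℝ × ℝ, Set.indicator B (fun _ => (n : ENNReal)) z ≤
        Set.indicator (Icc (0:ℝ) 1 ×ˢ Icc (-(C+1)) (C+1)) (fun _ => (n : ENNReal)) z := by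
      intro z
      by_cases hz : z ∈ B
      · rw [Set.indicator_of_mem hz, Set.indicator_of_mem]
        refine ⟨hz.1, hz.2.1, le_trans hz.2.2 (le_trans (le_abs_self _) (hband z.1 hz.1))⟩
      · rw [Set.indicator_of_notMem hz]; exact zero_le
    have hle : ν Set.univ ≤ (n : ENNReal) * volume (Icc (0:ℝ) 1 ×ˢ Icc (-(C+1)) (C+1)) := by
      rw [hνapply Set.univ MeasurableSet.univ, Measure.restrict_univ]
      calc ∫⁻ z, Set.indicator B (fun _ => (n : ENNReal)) z
          ≤ ∫⁻ z, Set.indicator (Icc (0:ℝ) 1 ×ˢ Icc (-(C+1)) (C+1))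
              (fun _ => (n : ENNReal)) z := lintegral_mono hb
        _ = (n : ENNReal) * volume (Icc (0:ℝ) 1 ×ˢ Icc (-(C+1)) (C+1)) := by
            rw [lintegral_indicator (measurableSet_Icc.prod measurableSet_Icc),
              setLIntegral_const]
    exact ne_top_of_le_ne_top (ENNReal.mul_ne_top (ENNReal.natCast_ne_top n) hrect) hle
  have hSfin : ν S ≠ ⊤ := ne_top_of_le_ne_top hfin (measure_mono (subset_univ S))
  -- lower bound on ν S
  set m : ℕ := n - 1 with hmdef
  have hmcast : ((m:ℕ):ℝ) = (n:ℝ) - 1 := by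
    rw [hmdef]; push_cast [Nat.cast_sub (by omega : 1 ≤ n)]; ring
  set S₂ : Set (ℝ × ℝ) := {z : ℝ × ℝ | z.1 ∈ Icc (0:ℝ) 1 ∧ z.2 ∈ Ioc 0 (fn z.1)} with hS₂def
  have hS₂ : MeasurableSet S₂ := by
    have h1 : MeasurableSet {z : ℝ × ℝ | z.1 ∈ Icc (0:ℝ) 1} :=
      measurable_fst measurableSet_Icc
    have h2 : MeasurableSet {z : ℝ × ℝ | 0 < z.2} :=
      measurableSet_lt measurable_const measurable_snd
    have h3 : MeasurableSet {z : ℝ × ℝ | z.2 ≤ fn z.1} :=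
      measurableSet_le measurable_snd (hfc.measurable.comp measurable_fst)
    have : S₂ = {z : ℝ × ℝ | z.1 ∈ Icc (0:ℝ) 1} ∩
        ({z : ℝ × ℝ | 0 < z.2} ∩ {z : ℝ × ℝ | z.2 ≤ fn z.1}) := by
      ext z; simp [hS₂def, Set.mem_Ioc, and_assoc]
    rw [this]; exact h1.inter (h2.inter h3)
  have hBS : B ∩ S = S₂ := by
    ext z
    constructor
    · rintro ⟨⟨h1, h2, h3⟩, h4⟩
      exact ⟨h1, h4, h3⟩
    · rintro ⟨h1, h2, h3⟩
      exact ⟨⟨h1, le_trans (by linarith : -(C+1) ≤ (0:ℝ)) h2.le, h3⟩, h2⟩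
  have hνS : ν S = (n : ENNReal) * volume S₂ := by
    rw [hνapply S hSmeas, lintegral_indicator hB, Measure.restrict_restrict hB,
      hBS, setLIntegral_const]
  have hvol : volume S₂ = ∫⁻ x in Icc (0:ℝ) 1, ENNReal.ofReal (fn x) := by
    rw [Measure.volume_eq_prod, Measure.prod_apply hS₂]
    have hfib : ∀ x : ℝ, volume (Prod.mk x ⁻¹' S₂)
        = Set.indicator (Icc (0:ℝ) 1) (fun x => ENNReal.ofReal (fn x)) x := by
      intro x
      by_cases hx : x ∈ Icc (0:ℝ) 1
      · rw [Set.indicator_of_mem hx]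
        have : Prod.mk x ⁻¹' S₂ = Ioc 0 (fn x) := by
          ext y; simp only [hS₂def, Set.mem_preimage, Set.mem_setOf_eq, Set.mem_Ioc]
          exact ⟨fun h => h.2, fun h => ⟨hx, h⟩⟩
        rw [this, Real.volume_Ioc]; simp
      · rw [Set.indicator_of_notMem hx]
        have : Prod.mk x ⁻¹' S₂ = ∅ := by
          ext y; simp only [hS₂def, Set.mem_preimage, Set.mem_setOf_eq, Set.mem_empty_iff_false,
            iff_false, not_and]
          exact fun h => (hx h).elim
        rw [this]; simp
    rw [lintegral_congr hfib, lintegral_indicator measurableSet_Icc]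
  -- the real integral
  have hmax : ∀ a : ℝ, ENNReal.ofReal (max a 0) = ENNReal.ofReal a := by
    intro a
    rcases le_total a 0 with h | h
    · rw [max_eq_right h, ENNReal.ofReal_zero, eq_comm, ENNReal.ofReal_eq_zero]; exact h
    · rw [max_eq_left h]
  have hint : IntegrableOn (fun x => max (fn x) 0) (Icc (0:ℝ) 1) volume :=
    (hfc.max continuous_const).integrableOn_Icc
  have hIlb : ENNReal.ofReal (∫ x in Icc (0:ℝ) 1, max (fn x) 0)
      ≤ ∫⁻ x in Icc (0:ℝ) 1, ENNReal.ofReal (fn x) := by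
    rw [ofReal_integral_eq_lintegral_ofReal hint
      (ae_of_all _ fun x => le_max_right _ _)]
    exact le_of_eq (lintegral_congr fun x => hmax (fn x))
  have hIval : C / (π^2 * ((n:ℝ)-1)) ≤ ∫ x in Icc (0:ℝ) 1, max (fn x) 0 := by
    have heq1 : ∫ x in Icc (0:ℝ) 1, max (fn x) 0 = ∫ x in (0:ℝ)..1, max (fn x) 0 := by
      rw [MeasureTheory.integral_Icc_eq_integral_Ioc,
        intervalIntegral.integral_of_le (zero_le_one)]
    set a₀ : ℝ := C / (π * ((n:ℝ)-1)) with ha₀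
    have ha₀pos : 0 < a₀ := by positivity
    have heq2 : ∀ x : ℝ, max (fn x) 0 = a₀ * max (Real.sin (π * ((n:ℝ)-1) * x)) 0 := by
      intro x
      rw [hfn x, mul_max_of_nonneg _ _ ha₀pos.le, mul_zero]
    have hc : (π * ((n:ℝ)-1)) ≠ 0 := by positivity
    have heq3 : ∫ x in (0:ℝ)..1, max (Real.sin (π * ((n:ℝ)-1) * x)) 0
        = (π * ((n:ℝ)-1))⁻¹ * ∫ u in (0:ℝ)..(π * ((n:ℝ)-1)), max (Real.sin u) 0 := by
      rw [intervalIntegral.integral_comp_mul_left (fun u => max (Real.sin u) 0) hc]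
      simp [smul_eq_mul]
    have hK : ((n:ℝ)-1) ≤ ∫ u in (0:ℝ)..(π * ((n:ℝ)-1)), max (Real.sin u) 0 := by
      have := sinpos_ge m
      rw [hmcast] at this
      exact this
    rw [heq1]
    calc C / (π^2 * ((n:ℝ)-1))
        = a₀ * ((π * ((n:ℝ)-1))⁻¹ * ((n:ℝ)-1)) := by
          rw [ha₀]; field_simp
      _ ≤ a₀ * ((π * ((n:ℝ)-1))⁻¹ * ∫ u in (0:ℝ)..(π * ((n:ℝ)-1)), max (Real.sin u) 0) := by
          apply mul_le_mul_of_nonneg_left _ ha₀pos.le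
          apply mul_le_mul_of_nonneg_left hK (by positivity)
      _ = ∫ x in (0:ℝ)..1, max (fn x) 0 := by
          rw [← heq3, ← intervalIntegral.integral_const_mul]
          apply intervalIntegral.integral_congr
          intro x _
          exact (heq2 x).symm
  have htarget : ENNReal.ofReal ((C / π^2) * ((n:ℝ)/((n:ℝ)-1))) ≤ ν S := by
    have h1 : (C / π^2) * ((n:ℝ)/((n:ℝ)-1)) = (n:ℝ) * (C / (π^2 * ((n:ℝ)-1))) := by
      field_simp
    rw [h1, ENNReal.ofReal_mul (by positivity : (0:ℝ) ≤ (n:ℝ)), ENNReal.ofReal_natCast,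
      hνS, hvol]
    apply mul_le_mul_right
    exact le_trans (ENNReal.ofReal_le_ofReal hIval) hIlb
  have hs_lb : (C / π^2) * ((n:ℝ)/((n:ℝ)-1)) ≤ (ν S).toReal :=
    (ENNReal.ofReal_le_iff_le_toReal hSfin).1 htarget
  -- compute pppLaw ν A
  set S' : Set (ℝ × ℝ) := {z : ℝ × ℝ | z.2 ≤ 0} with hS'def
  have hS' : MeasurableSet S' := measurableSet_le measurable_snd measurable_const
  have hcompl : ∀ k : ℕ, Sigma.mk k ⁻¹' Aᶜ = Set.pi Set.univ (fun _ : Fin k => S') := by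
    intro k; ext f
    simp [hAdef, hS'def, Set.mem_pi, not_lt]
  have h2 : pppLaw ν Aᶜ = ENNReal.ofReal (Real.exp ((ν S').toReal - (ν Set.univ).toReal)) :=
    pppLaw_apply_pi ν hfin _ _ hS' hcompl
  have h1 : pppLaw ν Set.univ = 1 := by
    rw [pppLaw_apply_pi ν hfin Set.univ Set.univ MeasurableSet.univ (fun k => by simp)]
    simp
  have hunion : S' ∪ S = Set.univ := by
    ext z; simp [hS'def, hSdef, le_or_gt]
  have hdisj : Disjoint S' S := by
    rw [Set.disjoint_left]
    intro z hz1 hz2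
    simp only [hS'def, hSdef, Set.mem_setOf_eq] at hz1 hz2
    exact absurd hz1 (not_le.2 hz2)
  have hsum : ν Set.univ = ν S' + ν S := by
    rw [← hunion, measure_union hdisj hSmeas]
  have hS'fin : ν S' ≠ ⊤ := ne_top_of_le_ne_top hfin (measure_mono (subset_univ S'))
  have hdiff : (ν S').toReal - (ν Set.univ).toReal = -(ν S).toReal := by
    rw [hsum, ENNReal.toReal_add hS'fin hSfin]; ring
  have hAcne : pppLaw ν Aᶜ ≠ ⊤ := by rw [h2]; exact ENNReal.ofReal_ne_top
  have key : pppLaw ν A = 1 - ENNReal.ofReal (Real.exp (-(ν S).toReal)) := by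
    have hadd : pppLaw ν A + pppLaw ν Aᶜ = 1 := by
      rw [measure_add_measure_compl hA, h1]
    have := ENNReal.eq_sub_of_add_eq hAcne hadd
    rw [this, h2, hdiff]
  -- final inequalities
  have hg1 : ENNReal.ofReal (1 - Real.exp (-(C / π ^ 2) * ((n:ℝ)/((n:ℝ)-1)))) ≤ pppLaw ν A := by
    have h1e : ENNReal.ofReal (1 - Real.exp (-(C / π ^ 2) * ((n:ℝ)/((n:ℝ)-1))))
        = 1 - ENNReal.ofReal (Real.exp (-(C / π ^ 2) * ((n:ℝ)/((n:ℝ)-1)))) := by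
      rw [ENNReal.ofReal_sub _ (Real.exp_nonneg _), ENNReal.ofReal_one]
    rw [key, h1e]
    apply tsub_le_tsub_left
    apply ENNReal.ofReal_le_ofReal
    apply Real.exp_le_exp.2
    have : -(C / π ^ 2) * ((n:ℝ)/((n:ℝ)-1)) = -((C / π ^ 2) * ((n:ℝ)/((n:ℝ)-1))) := by ring
    rw [this]
    exact neg_le_neg hs_lb
  refine ⟨hg1, ?_⟩
  refine le_trans (ENNReal.ofReal_le_ofReal ?_) hg1
  have hratio : (1:ℝ) ≤ (n:ℝ)/((n:ℝ)-1) := by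
    rw [le_div_iff₀ hb0]; linarith
  have : -(C / π ^ 2) * ((n:ℝ)/((n:ℝ)-1)) ≤ -(C / π ^ 2) := by
    have hCpi : (0:ℝ) < C / π^2 := by positivity
    nlinarith
  have := Real.exp_le_exp.2 this
  linarith
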